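/- Let F_q be a finite field of characteristic p, let 1 ≤ n ≤ q, and let b ∈ F_q. Let M(n,b) be the number of n-element subsets S of F_q with Σ_{a∈S} a = b. If p does not divide n, then M(n,b) = (1/q) * C(q,n). -/

import Mathlib

open Finset

lemma count_const (F : Type*) [Field F] [Fintype F] [DecidableEq F] (n : ℕ)
    (hn : (n : F) ≠ 0) (b b' : F) :
    (univ.filter fun S : Finset F => S.card = n ∧ ∑ x ∈ S, x = b).card =
    (univ.filter fun S : Finset F => S.card = n ∧ ∑ x ∈ S, x = b').card := by
  set c := (n : F)⁻¹ * (b' - b) with hc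
  apply Finset.card_bij (fun S _ => S.image (· + c))
  · rintro S hS
    simp only [mem_filter, mem_univ, true_and] at hS ⊢
    obtain ⟨hcard, hsum⟩ := hS
    constructor
    · rw [Finset.card_image_of_injective _ (add_left_injective c), hcard]
    · rw [Finset.sum_image (by intro x _ y _ h; exact add_left_injective c h)]
      rw [Finset.sum_add_distrib, hsum, Finset.sum_const, hcard, nsmul_eq_mul, hc]
      field_simp
      ring
  · intro S hS T hT h
    have : ∀ U : Finset F, (U.image (· + c)).image (· + (-c)) = U := by
      intro U
      rw [Finset.image_image]
      simp [Function.comp]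
    rw [← this S, ← this T, h]
  · intro T hT
    refine ⟨T.image (· + (-c)), ?_, ?_⟩
    · simp only [mem_filter, mem_univ, true_and] at hT ⊢
      obtain ⟨hcard, hsum⟩ := hT
      constructor
      · rw [Finset.card_image_of_injective _ (add_left_injective _), hcard]
      · rw [Finset.sum_image (by intro x _ y _ h; exact add_left_injective _ h)]
        rw [Finset.sum_add_distrib, hsum, Finset.sum_const, hcard, nsmul_eq_mul, hc]
        field_simp
        ring
    · rw [Finset.image_image]
      simp [Function.comp]

theorem stmt_2 (p e q n : ℕ) (hp : p.Prime) (he : 0 < e) (hq : q = p ^ e)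
    (F : Type*) [Field F] [Fintype F] (hF : Fintype.card F = q) (hchar : CharP F p)
    (hn1 : 1 ≤ n) (hnq : n ≤ q) (hpn : ¬ p ∣ n) (b : F) :
    (Nat.card {S : Finset F // S.card = n ∧ ∑ x ∈ S, x = b} : ℚ)
      = (1 / q) * q.choose n := by
  classical
  have hn : (n : F) ≠ 0 := by
    rw [Ne, CharP.cast_eq_zero_iff F p]; exact hpn
  have hqpos : 0 < q := hq ▸ pow_pos hp.pos e
  set M := fun b' : F => (univ.filter fun S : Finset F => S.card = n ∧ ∑ x ∈ S, x = b').card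
    with hM
  have hNat : Nat.card {S : Finset F // S.card = n ∧ ∑ x ∈ S, x = b} = M b := by
    rw [Nat.card_eq_fintype_card, Fintype.card_subtype]
  have hsum : ∑ b' : F, M b' = q.choose n := by
    have h1 : (univ.filter fun S : Finset F => S.card = n).card = q.choose n := by
      rw [← hF, ← Fintype.card_finset_len, Fintype.card_subtype]
    rw [← h1]
    rw [Finset.card_eq_sum_card_fiberwise
      (f := fun S : Finset F => ∑ x ∈ S, x) (t := univ) (fun _ _ => mem_univ _)]
    apply Finset.sum_congr rfl
    intro b' _
    rw [Finset.filter_filter]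
  have hconst : ∀ b' : F, M b' = M b := fun b' => count_const F n hn b' b
  have hqM : q * M b = q.choose n := by
    rw [← hsum, Finset.sum_congr rfl (fun b' _ => hconst b'), Finset.sum_const,
      Finset.card_univ, hF, smul_eq_mul]
  rw [hNat]
  have : (q : ℚ) * M b = q.choose n := by exact_mod_cast hqM
  field_simp
  linarith [this]
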